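/- arXiv:2202.02684 — 10 statements merged into one kernel-verified Lean document; each statement's English description precedes it below -/
import Mathlib

section
/- Let p and q be probability vectors on a finite set of size N and let ε > 0 be such that q_i ≥ ε for all i. Then D(p‖q) ≤ (1/ε)(Σ_i |p_i − q_i|)², i.e., the Kullback–Leibler divergence is bounded above by the squared ℓ1 distance divided by ε. -/
/-- For probability vectors `p, q` on a finite set of size `N` with
`q_i ≥ ε > 0`, the Kullback–Leibler divergence `D(p‖q) = ∑ p_i log (p_i / q_i)` satisfies the
reverse-Pinsker-type bound `D(p‖q) ≤ (1/ε) (∑_i |p_i − q_i|)²`. -/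
theorem statement3 {N : ℕ} (p q : Fin N → ℝ) (ε : ℝ) (hε : 0 < ε)
    (hp0 : ∀ i, 0 ≤ p i) (hp1 : ∑ i, p i = 1)
    (hq1 : ∑ i, q i = 1) (hqε : ∀ i, ε ≤ q i) :
    ∑ i, p i * Real.log (p i / q i) ≤ (1 / ε) * (∑ i, |p i - q i|) ^ 2 := by
  have hq0 : ∀ i, 0 < q i := fun i => lt_of_lt_of_le hε (hqε i)
  have step1 : ∑ i, p i * Real.log (p i / q i) ≤ ∑ i, p i * (p i / q i - 1) := by
    apply Finset.sum_le_sum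
    intro i _
    rcases eq_or_lt_of_le (hp0 i) with h | h
    · simp [← h]
    · have hx : 0 < p i / q i := div_pos h (hq0 i)
      exact mul_le_mul_of_nonneg_left (Real.log_le_sub_one_of_pos hx) (hp0 i)
  have step2 : ∑ i, p i * (p i / q i - 1) = ∑ i, (p i - q i) ^ 2 / q i := by
    have : ∀ i, (p i - q i) ^ 2 / q i = p i * (p i / q i - 1) + (q i - p i) := by
      intro i
      have hq := (hq0 i).ne'
      field_simp
      ring
    rw [Finset.sum_congr rfl (fun i _ => this i), Finset.sum_add_distrib,
      Finset.sum_sub_distrib, hp1, hq1]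
    ring
  have step3 : ∑ i, (p i - q i) ^ 2 / q i ≤ (1 / ε) * ∑ i, (p i - q i) ^ 2 := by
    rw [Finset.mul_sum]
    apply Finset.sum_le_sum
    intro i _
    rw [div_eq_mul_inv, mul_comm, one_div]
    exact mul_le_mul_of_nonneg_right (inv_anti₀ hε (hqε i)) (sq_nonneg _)
  have step4 : ∑ i, (p i - q i) ^ 2 ≤ (∑ i, |p i - q i|) ^ 2 := by
    have : ∀ i, (p i - q i) ^ 2 = |p i - q i| ^ 2 := fun i => (sq_abs _).symm
    rw [Finset.sum_congr rfl fun i _ => this i]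
    exact Finset.sum_sq_le_sq_sum_of_nonneg fun i _ => abs_nonneg _
  calc ∑ i, p i * Real.log (p i / q i)
      ≤ ∑ i, (p i - q i) ^ 2 / q i := step1.trans_eq step2
    _ ≤ (1 / ε) * ∑ i, (p i - q i) ^ 2 := step3
    _ ≤ (1 / ε) * (∑ i, |p i - q i|) ^ 2 :=
        mul_le_mul_of_nonneg_left step4 (by positivity)
end

section
/- Let p and q be probability vectors on a finite set of size N, with q_i ≥ ε > 0 and p_i > 0 for all i. Then H(p) − H(q) ≥ ⟨−(log q + 1), p − q⟩ − (N/ε)‖p − q‖₂², where log q + 1 denotes the vector with entries log q_i + 1 and ‖·‖₂ is the Euclidean norm. -/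
/-- For probability vectors `p, q` on a finite set of size `N` with
`q_i ≥ ε > 0` and `p_i > 0`, the entropies satisfy
`H(p) − H(q) ≥ ⟨−(log q + 1), p − q⟩ − (N/ε) ‖p − q‖₂²`, where `−(log q + 1)` is the
gradient of the entropy at `q` and `‖·‖₂` is the Euclidean norm. -/
theorem statement4 {N : ℕ} (p q : Fin N → ℝ) (ε : ℝ) (hε : 0 < ε)
    (hp0 : ∀ i, 0 < p i) (hqε : ∀ i, ε ≤ q i)
    (hp1 : ∑ i, p i = 1) (hq1 : ∑ i, q i = 1) :
    (-∑ i, p i * Real.log (p i)) - (-∑ i, q i * Real.log (q i))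
      ≥ (∑ i, (-(Real.log (q i) + 1)) * (p i - q i))
        - ((N : ℝ) / ε) * ∑ i, (p i - q i) ^ 2 := by
  have hq0 : ∀ i, 0 < q i := fun i => lt_of_lt_of_le hε (hqε i)
  have hN : (1 : ℝ) ≤ (N : ℝ) := by
    rcases Nat.eq_zero_or_pos N with h | h
    · subst h; simp at hp1
    · exact_mod_cast h
  -- KL divergence bound
  have key : ∑ i, p i * (Real.log (p i) - Real.log (q i))
      ≤ ((N : ℝ) / ε) * ∑ i, (p i - q i) ^ 2 := by
    have h1 : ∀ i, p i * (Real.log (p i) - Real.log (q i))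
        ≤ (p i - q i) ^ 2 / q i + (p i - q i) := by
      intro i
      have hlog : Real.log (p i) - Real.log (q i) ≤ p i / q i - 1 := by
        have := Real.log_le_sub_one_of_pos (div_pos (hp0 i) (hq0 i))
        rwa [Real.log_div (hp0 i).ne' (hq0 i).ne'] at this
      calc p i * (Real.log (p i) - Real.log (q i)) ≤ p i * (p i / q i - 1) :=
            mul_le_mul_of_nonneg_left hlog (hp0 i).le
        _ = (p i - q i) ^ 2 / q i + (p i - q i) := by
            have hne := (hq0 i).ne'
            field_simp
            ring
    have h2 : ∑ i, p i * (Real.log (p i) - Real.log (q i))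
        ≤ ∑ i, ((p i - q i) ^ 2 / q i + (p i - q i)) :=
      Finset.sum_le_sum fun i _ => h1 i
    have h3 : ∑ i, ((p i - q i) ^ 2 / q i + (p i - q i))
        = ∑ i, (p i - q i) ^ 2 / q i := by
      rw [Finset.sum_add_distrib, Finset.sum_sub_distrib, hp1, hq1]
      ring
    have h4 : ∑ i, (p i - q i) ^ 2 / q i ≤ ∑ i, (p i - q i) ^ 2 / ε := by
      apply Finset.sum_le_sum
      intro i _
      gcongr
      exact hqε i
    have hS : (0 : ℝ) ≤ ∑ i, (p i - q i) ^ 2 :=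
      Finset.sum_nonneg fun i _ => sq_nonneg _
    have h5 : ∑ i, (p i - q i) ^ 2 / ε ≤ ((N : ℝ) / ε) * ∑ i, (p i - q i) ^ 2 := by
      rw [← Finset.sum_div, div_mul_eq_mul_div]
      gcongr
      exact le_mul_of_one_le_left hS hN
    linarith
  -- expand sums
  have eL : ∑ i, p i * (Real.log (p i) - Real.log (q i))
      = ∑ i, p i * Real.log (p i) - ∑ i, p i * Real.log (q i) := by
    rw [← Finset.sum_sub_distrib]
    exact Finset.sum_congr rfl fun i _ => by ring
  have e1 : ∑ i, (-(Real.log (q i) + 1)) * (p i - q i)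
      = (∑ i, q i * Real.log (q i) - ∑ i, p i * Real.log (q i))
        - (∑ i, p i - ∑ i, q i) := by
    have h : ∀ i : Fin N, (-(Real.log (q i) + 1)) * (p i - q i)
        = (q i * Real.log (q i) - p i * Real.log (q i)) - (p i - q i) := fun i => by ring
    simp only [h, Finset.sum_sub_distrib]
  rw [e1, hp1, hq1]
  linarith [key, eL]
end

section
/- Let Z, Y be finite sets with |Z| = N_z, |Y| = N_y, let π be a probability vector on Y, and let P^m, P^n be collections of probability vectors on Z indexed by y ∈ Y (conditional distributions), with P^n(z|y) ≥ ε > 0 and P^m(z|y) > 0 for all z, y. Then Σ_y π_y [H(P^m(·|y)) − H(P^n(·|y))] ≥ Σ_y π_y ⟨−(log P^n(·|y) + 1), P^m(·|y) − P^n(·|y)⟩ − (N_z N_y/ε) Σ_y ‖P^m(·|y) − P^n(·|y)‖₂². -/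
private lemma key5 {a b ε : ℝ} (hε : 0 < ε) (ha : 0 < a) (hb : ε ≤ b) :
    a * Real.log (a / b) ≤ (a - b) + (a - b) ^ 2 / ε := by
  have hb0 : 0 < b := lt_of_lt_of_le hε hb
  have h1 : Real.log (a / b) ≤ a / b - 1 :=
    Real.log_le_sub_one_of_pos (div_pos ha hb0)
  have h2 : a * Real.log (a / b) ≤ a * (a / b - 1) :=
    mul_le_mul_of_nonneg_left h1 ha.le
  have h3 : a * (a / b - 1) = (a - b) + (a - b) ^ 2 / b := by
    field_simp; ring
  have h4 : (a - b) ^ 2 / b ≤ (a - b) ^ 2 / ε :=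
    div_le_div_of_nonneg_left (sq_nonneg _) hε hb
  linarith

private lemma pt5 {a b ε : ℝ} (hε : 0 < ε) (ha : 0 < a) (hb : ε ≤ b) :
    (-(Real.log b + 1)) * (a - b) - (a - b) ^ 2 / ε
      ≤ (-(a * Real.log a)) - (-(b * Real.log b)) := by
  have hb0 : 0 < b := lt_of_lt_of_le hε hb
  have hk := key5 hε ha hb
  rw [Real.log_div ha.ne' hb0.ne'] at hk
  nlinarith [hk]

/-- Conditional-entropy half of the weak-convexity lemma: for finite sets
`Z, Y` with `|Z| = N_z`, `|Y| = N_y`, a probability vector `π` on `Y`, and conditional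
distributions `P^m(·|y), P^n(·|y)` on `Z` with `P^n(z|y) ≥ ε > 0` and `P^m(z|y) > 0`,
`∑_y π_y [H(P^m(·|y)) − H(P^n(·|y))]
  ≥ ∑_y π_y ⟨−(log P^n(·|y) + 1), P^m(·|y) − P^n(·|y)⟩ − (N_z N_y / ε) ∑_y ‖P^m(·|y) − P^n(·|y)‖₂²`. -/
theorem statement5 {Z Y : Type*} [Fintype Z] [Fintype Y]
    (π : Y → ℝ) (hπ0 : ∀ y, 0 ≤ π y) (hπ1 : ∑ y, π y = 1)
    (Pm Pn : Y → Z → ℝ) (ε : ℝ) (hε : 0 < ε)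
    (hPm0 : ∀ y z, 0 < Pm y z) (hPnε : ∀ y z, ε ≤ Pn y z)
    (hPm1 : ∀ y, ∑ z, Pm y z = 1) (hPn1 : ∀ y, ∑ z, Pn y z = 1) :
    ∑ y, π y * ((-∑ z, Pm y z * Real.log (Pm y z)) - (-∑ z, Pn y z * Real.log (Pn y z)))
      ≥ (∑ y, π y * ∑ z, (-(Real.log (Pn y z) + 1)) * (Pm y z - Pn y z))
        - ((Fintype.card Z : ℝ) * (Fintype.card Y : ℝ) / ε) *
            ∑ y, ∑ z, (Pm y z - Pn y z) ^ 2 := by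
  -- Y and Z are nonempty
  have hY : Nonempty Y := by
    rcases isEmpty_or_nonempty Y with h | h
    · rw [Finset.univ_eq_empty, Finset.sum_empty] at hπ1; norm_num at hπ1
    · exact h
  have hZ : Nonempty Z := by
    rcases isEmpty_or_nonempty Z with h | h
    · have := hPm1 (Classical.arbitrary Y)
      rw [Finset.univ_eq_empty, Finset.sum_empty] at this; norm_num at this
    · exact h
  have hNz : (1 : ℝ) ≤ (Fintype.card Z : ℝ) := by
    exact_mod_cast Fintype.card_pos
  have hNy : (1 : ℝ) ≤ (Fintype.card Y : ℝ) := by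
    exact_mod_cast Fintype.card_pos
  have hC : (1 : ℝ) ≤ (Fintype.card Z : ℝ) * (Fintype.card Y : ℝ) := by nlinarith
  have hπle : ∀ y, π y ≤ 1 := by
    intro y
    calc π y ≤ ∑ y', π y' := Finset.single_le_sum (fun i _ => hπ0 i) (Finset.mem_univ y)
    _ = 1 := hπ1
  -- per-y inequality
  have hy : ∀ y, (∑ z, (-(Real.log (Pn y z) + 1)) * (Pm y z - Pn y z))
        - (∑ z, (Pm y z - Pn y z) ^ 2) / ε
      ≤ (-∑ z, Pm y z * Real.log (Pm y z)) - (-∑ z, Pn y z * Real.log (Pn y z)) := by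
    intro y
    have h : ∑ z, ((-(Real.log (Pn y z) + 1)) * (Pm y z - Pn y z) - (Pm y z - Pn y z) ^ 2 / ε)
        ≤ ∑ z, ((-(Pm y z * Real.log (Pm y z))) - (-(Pn y z * Real.log (Pn y z)))) :=
      Finset.sum_le_sum fun z _ => pt5 hε (hPm0 y z) (hPnε y z)
    rw [Finset.sum_sub_distrib, Finset.sum_sub_distrib, ← Finset.sum_div,
      Finset.sum_neg_distrib, Finset.sum_neg_distrib] at h
    exact h
  -- weight by π and sum
  have h1 : ∑ y, π y * ((∑ z, (-(Real.log (Pn y z) + 1)) * (Pm y z - Pn y z))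
        - (∑ z, (Pm y z - Pn y z) ^ 2) / ε)
      ≤ ∑ y, π y * ((-∑ z, Pm y z * Real.log (Pm y z)) - (-∑ z, Pn y z * Real.log (Pn y z))) :=
    Finset.sum_le_sum fun y _ => mul_le_mul_of_nonneg_left (hy y) (hπ0 y)
  have h2 : ∀ y, π y * ((∑ z, (Pm y z - Pn y z) ^ 2) / ε)
      ≤ ((Fintype.card Z : ℝ) * (Fintype.card Y : ℝ) / ε) * ∑ z, (Pm y z - Pn y z) ^ 2 := by
    intro y
    have hT : 0 ≤ ∑ z, (Pm y z - Pn y z) ^ 2 := Finset.sum_nonneg fun z _ => sq_nonneg _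
    rw [mul_div_assoc', div_mul_eq_mul_div]
    apply div_le_div_of_nonneg_right _ hε.le
    exact mul_le_mul_of_nonneg_right (le_trans (hπle y) hC) hT
  have h3 : ∑ y, π y * ((∑ z, (Pm y z - Pn y z) ^ 2) / ε)
      ≤ ((Fintype.card Z : ℝ) * (Fintype.card Y : ℝ) / ε) * ∑ y, ∑ z, (Pm y z - Pn y z) ^ 2 := by
    rw [Finset.mul_sum]
    exact Finset.sum_le_sum fun y _ => h2 y
  have h4 : ∑ y, π y * ((∑ z, (-(Real.log (Pn y z) + 1)) * (Pm y z - Pn y z))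
        - (∑ z, (Pm y z - Pn y z) ^ 2) / ε)
      = (∑ y, π y * ∑ z, (-(Real.log (Pn y z) + 1)) * (Pm y z - Pn y z))
        - ∑ y, π y * ((∑ z, (Pm y z - Pn y z) ^ 2) / ε) := by
    rw [← Finset.sum_sub_distrib]
    exact Finset.sum_congr rfl fun y _ => by ring
  linarith
end

section
/- Let Z, Y be finite sets with |Z| = N_z, |Y| = N_y, let π be a probability vector on Y, let σ_γ ∈ ℝ, and let ε_z, ε_{z|y} > 0. Define G(q) = σ_γ H(p_z) + Σ_y π_y H(p_{z|y}) for q = (p_z, (p_{z|y})_{y∈Y}) ranging over tuples of probability vectors on Z with p_z(z) ≥ ε_z and p_{z|y}(z) ≥ ε_{z|y} for all z, y. Then G is σ_G-weakly convex on this set with σ_G = max{2N_z|σ_γ|/ε_z, 2N_zN_y/ε_{z|y}}; i.e., for all q^m, q^n in the set, G(q^m) ≥ G(q^n) + ⟨∇G(q^n), q^m − q^n⟩ − (σ_G/2)‖q^m − q^n‖₂². -/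
open RealInnerProductSpace

/-- Pointwise second-order bound for `x ↦ -(x log x)` on `[ε, ∞)`. -/
private lemma bregman_bound {ε a b : ℝ} (hε : 0 < ε) (ha : ε ≤ a) (hb : ε ≤ b) :
    |(-(a * Real.log a)) - (-(b * Real.log b)) - (-(Real.log b + 1)) * (a - b)|
      ≤ (a - b) ^ 2 / ε := by
  have ha0 : 0 < a := hε.trans_le ha
  have hb0 : 0 < b := hε.trans_le hb
  have hkey : (-(a * Real.log a)) - (-(b * Real.log b)) - (-(Real.log b + 1)) * (a - b)
      = a * (Real.log b - Real.log a) + (a - b) := by ring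
  rw [hkey]
  have h1 : Real.log b - Real.log a ≤ b / a - 1 := by
    have := Real.log_le_sub_one_of_pos (div_pos hb0 ha0)
    rwa [Real.log_div hb0.ne' ha0.ne'] at this
  have h2 : Real.log a - Real.log b ≤ a / b - 1 := by
    have := Real.log_le_sub_one_of_pos (div_pos ha0 hb0)
    rwa [Real.log_div ha0.ne' hb0.ne'] at this
  rw [abs_le]
  constructor
  · -- lower bound: ≥ -(a-b)^2/b ≥ -(a-b)^2/ε
    have hub : a * (Real.log b - Real.log a) ≥ a * (1 - a / b) := by
      have : 1 - a / b ≤ Real.log b - Real.log a := by linarith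
      exact mul_le_mul_of_nonneg_left this ha0.le
    have hid : a * (1 - a / b) + (a - b) = -((a - b) ^ 2 / b) := by
      field_simp; ring
    have hmono : (a - b) ^ 2 / b ≤ (a - b) ^ 2 / ε :=
      div_le_div_of_nonneg_left (sq_nonneg _) hε hb
    linarith
  · -- upper bound: ≤ 0 ≤ (a-b)^2/ε
    have hub : a * (Real.log b - Real.log a) ≤ a * (b / a - 1) :=
      mul_le_mul_of_nonneg_left h1 ha0.le
    have hid : a * (b / a - 1) = b - a := by field_simp
    have : (0:ℝ) ≤ (a - b) ^ 2 / ε := div_nonneg (sq_nonneg _) hε.le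
    linarith

set_option maxHeartbeats 1600000 in
/-- Weak convexity of the sub-objective `G` of the multi-view IB augmented
Lagrangian. Encode `q = (p_z, (p_{z|y})_y)` as an element of `EuclideanSpace ℝ (Z ⊕ Z × Y)`
(component `Sum.inl z` is `p_z(z)`, component `Sum.inr (z,y)` is `p_{z|y}(z)`), and let
`G(q) = σ_γ H(p_z) + ∑_y π_y H(p_{z|y})`. On the set of tuples of probability vectors with
`p_z(z) ≥ ε_z` and `p_{z|y}(z) ≥ ε_{z|y}`, `G` is `σ_G`-weakly convex with
`σ_G = max{2 N_z |σ_γ| / ε_z, 2 N_z N_y / ε_{z|y}}`. -/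
theorem statement6 {Z Y : Type*} [Fintype Z] [Fintype Y]
    (π : Y → ℝ) (hπ0 : ∀ y, 0 ≤ π y) (hπ1 : ∑ y, π y = 1)
    (σγ εz εzy : ℝ) (hεz : 0 < εz) (hεzy : 0 < εzy)
    (G : EuclideanSpace ℝ (Z ⊕ Z × Y) → ℝ)
    (hG : ∀ q : EuclideanSpace ℝ (Z ⊕ Z × Y),
      G q = σγ * (-∑ z, q (Sum.inl z) * Real.log (q (Sum.inl z)))
        + ∑ y, π y * (-∑ z, q (Sum.inr (z, y)) * Real.log (q (Sum.inr (z, y))))) :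
    ∀ qm qn : EuclideanSpace ℝ (Z ⊕ Z × Y),
      (∑ z, qm (Sum.inl z) = 1) → (∀ y, ∑ z, qm (Sum.inr (z, y)) = 1) →
      (∀ z, εz ≤ qm (Sum.inl z)) → (∀ z y, εzy ≤ qm (Sum.inr (z, y))) →
      (∑ z, qn (Sum.inl z) = 1) → (∀ y, ∑ z, qn (Sum.inr (z, y)) = 1) →
      (∀ z, εz ≤ qn (Sum.inl z)) → (∀ z y, εzy ≤ qn (Sum.inr (z, y))) →
      G qm ≥ G qn + ⟪gradient G qn, qm - qn⟫
        - (max (2 * (Fintype.card Z : ℝ) * |σγ| / εz)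
               (2 * (Fintype.card Z : ℝ) * (Fintype.card Y : ℝ) / εzy)) / 2
          * ‖qm - qn‖ ^ 2 := by
  intro qm qn hm1 hm2 hm3 hm4 hn1 hn2 hn3 hn4
  classical
  -- nonemptiness
  haveI hZne : Nonempty Z := by
    by_contra h
    rw [not_nonempty_iff] at h
    simp at hn1
  haveI hYne : Nonempty Y := by
    by_contra h
    rw [not_nonempty_iff] at h
    simp at hπ1
  have hNz : (1:ℝ) ≤ (Fintype.card Z : ℝ) := by exact_mod_cast Fintype.card_pos
  have hNy : (1:ℝ) ≤ (Fintype.card Y : ℝ) := by exact_mod_cast Fintype.card_pos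
  -- weights
  set w : Z ⊕ Z × Y → ℝ := Sum.elim (fun _ => σγ) (fun p => π p.2) with hw
  have hpos : ∀ i, 0 < qn i := by
    rintro (z | ⟨z, y⟩)
    · exact hεz.trans_le (hn3 z)
    · exact hεzy.trans_le (hn4 z y)
  -- G as a single sum
  have hGfun : ∀ q : EuclideanSpace ℝ (Z ⊕ Z × Y),
      G q = ∑ i, w i * (-(q i * Real.log (q i))) := by
    intro q
    rw [hG q, Fintype.sum_sum_type, Fintype.sum_prod_type]
    rw [Finset.sum_comm]
    simp only [hw, Sum.elim_inl, Sum.elim_inr, mul_neg, Finset.mul_sum,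
      Finset.sum_neg_distrib]
  -- gradient
  set gr : EuclideanSpace ℝ (Z ⊕ Z × Y) :=
    (WithLp.toLp 2 (fun i => w i * (-(Real.log (qn i) + 1)))) with hgr
  have hfd : HasFDerivAt (fun q : EuclideanSpace ℝ (Z ⊕ Z × Y) =>
      ∑ i, w i * (-(q i * Real.log (q i))))
      (∑ i, (w i * (-(Real.log (qn i) + 1))) •
        (EuclideanSpace.proj i : EuclideanSpace ℝ (Z ⊕ Z × Y) →L[ℝ] ℝ)) qn := by
    apply HasFDerivAt.fun_sum
    intro i _
    have h1 : HasDerivAt (fun t : ℝ => w i * (-(t * Real.log t)))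
        (w i * (-(Real.log (qn i) + 1))) (qn i) :=
      ((Real.hasDerivAt_mul_log (hpos i).ne').neg).const_mul (w i)
    have hproj : HasFDerivAt (fun q : EuclideanSpace ℝ (Z ⊕ Z × Y) => q i)
        (EuclideanSpace.proj i : EuclideanSpace ℝ (Z ⊕ Z × Y) →L[ℝ] ℝ) qn :=
      (EuclideanSpace.proj i : EuclideanSpace ℝ (Z ⊕ Z × Y) →L[ℝ] ℝ).hasFDerivAt
    have := h1.comp_hasFDerivAt qn hproj; exact this
  have hgrad : HasGradientAt G gr qn := by
    rw [hasGradientAt_iff_hasFDerivAt]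
    have hfun : G = fun q : EuclideanSpace ℝ (Z ⊕ Z × Y) =>
        ∑ i, w i * (-(q i * Real.log (q i))) := funext hGfun
    rw [hfun]
    refine hfd.congr_fderiv ?_
    ext v
    simp only [InnerProductSpace.toDual_apply_apply, PiLp.toLp_apply, PiLp.inner_apply,
      RCLike.inner_apply, conj_trivial, ContinuousLinearMap.coe_sum',
      Finset.sum_apply, ContinuousLinearMap.coe_smul', Pi.smul_apply,
      PiLp.proj_apply, smul_eq_mul, hgr]
    exact Finset.sum_congr rfl fun i _ => mul_comm _ _
  have hgradG : gradient G qn = gr := hgrad.gradient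
  -- inner product as sum
  have hinner : ⟪gradient G qn, qm - qn⟫ = ∑ i, gr i * (qm i - qn i) := by
    rw [hgradG]
    simp [PiLp.inner_apply, PiLp.sub_apply, mul_comm]
  -- norm squared as sum
  have hnorm : ‖qm - qn‖ ^ 2 = ∑ i, (qm i - qn i) ^ 2 := by
    rw [EuclideanSpace.norm_sq_eq]
    simp [PiLp.sub_apply, sq]
  set σG : ℝ := max (2 * (Fintype.card Z : ℝ) * |σγ| / εz)
      (2 * (Fintype.card Z : ℝ) * (Fintype.card Y : ℝ) / εzy) with hσG
  have hA : |σγ| / εz ≤ σG / 2 := by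
    have h1 : (0:ℝ) ≤ |σγ| * ((Fintype.card Z : ℝ) - 1) / εz :=
      div_nonneg (mul_nonneg (abs_nonneg _) (by linarith)) hεz.le
    have h2 : 2 * (Fintype.card Z : ℝ) * |σγ| / εz ≤ σG := le_max_left _ _
    have h3 : 2 * (Fintype.card Z : ℝ) * |σγ| / εz
        = 2 * (|σγ| / εz) + 2 * (|σγ| * ((Fintype.card Z : ℝ) - 1) / εz) := by
      field_simp; ring
    linarith
  have hB : 1 / εzy ≤ σG / 2 := by
    have h1 : (0:ℝ) ≤ ((Fintype.card Z : ℝ) * (Fintype.card Y : ℝ) - 1) / εzy :=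
      div_nonneg (by nlinarith) hεzy.le
    have h2 : 2 * (Fintype.card Z : ℝ) * (Fintype.card Y : ℝ) / εzy ≤ σG := le_max_right _ _
    have h3 : 2 * (Fintype.card Z : ℝ) * (Fintype.card Y : ℝ) / εzy
        = 2 * (1 / εzy) + 2 * (((Fintype.card Z : ℝ) * (Fintype.card Y : ℝ) - 1) / εzy) := by
      field_simp; ring
    linarith
  have hπle1 : ∀ y, π y ≤ 1 := by
    intro y
    rw [← hπ1]
    exact Finset.single_le_sum (fun y' _ => hπ0 y') (Finset.mem_univ y)
  -- the key sum estimate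
  have hkey : ∀ i, w i * ((-(qm i * Real.log (qm i))) - (-(qn i * Real.log (qn i)))
      - (-(Real.log (qn i) + 1)) * (qm i - qn i))
      ≥ -(σG / 2 * (qm i - qn i) ^ 2) := by
    rintro (z | ⟨z, y⟩)
    · have hb := bregman_bound hεz (hm3 z) (hn3 z)
      have h1 : σγ * ((-(qm (Sum.inl z) * Real.log (qm (Sum.inl z))))
          - (-(qn (Sum.inl z) * Real.log (qn (Sum.inl z))))
          - (-(Real.log (qn (Sum.inl z)) + 1)) * (qm (Sum.inl z) - qn (Sum.inl z)))
          ≥ -(|σγ| * ((qm (Sum.inl z) - qn (Sum.inl z)) ^ 2 / εz)) := by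
        have := abs_mul σγ ((-(qm (Sum.inl z) * Real.log (qm (Sum.inl z))))
          - (-(qn (Sum.inl z) * Real.log (qn (Sum.inl z))))
          - (-(Real.log (qn (Sum.inl z)) + 1)) * (qm (Sum.inl z) - qn (Sum.inl z)))
        have hle := mul_le_mul_of_nonneg_left hb (abs_nonneg σγ)
        have hng := neg_abs_le (σγ * ((-(qm (Sum.inl z) * Real.log (qm (Sum.inl z))))
          - (-(qn (Sum.inl z) * Real.log (qn (Sum.inl z))))
          - (-(Real.log (qn (Sum.inl z)) + 1)) * (qm (Sum.inl z) - qn (Sum.inl z))))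
        rw [this] at hng
        linarith
      have h2 : |σγ| * ((qm (Sum.inl z) - qn (Sum.inl z)) ^ 2 / εz)
          ≤ σG / 2 * (qm (Sum.inl z) - qn (Sum.inl z)) ^ 2 := by
        have : |σγ| * ((qm (Sum.inl z) - qn (Sum.inl z)) ^ 2 / εz)
            = |σγ| / εz * (qm (Sum.inl z) - qn (Sum.inl z)) ^ 2 := by ring
        rw [this]
        exact mul_le_mul_of_nonneg_right hA (sq_nonneg _)
      simpa [hw] using le_trans (by linarith) h1
    · have hb := bregman_bound hεzy (hm4 z y) (hn4 z y)
      set T := (-(qm (Sum.inr (z, y)) * Real.log (qm (Sum.inr (z, y)))))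
          - (-(qn (Sum.inr (z, y)) * Real.log (qn (Sum.inr (z, y)))))
          - (-(Real.log (qn (Sum.inr (z, y))) + 1))
            * (qm (Sum.inr (z, y)) - qn (Sum.inr (z, y))) with hT
      have h1 : π y * T ≥ -(π y * ((qm (Sum.inr (z, y)) - qn (Sum.inr (z, y))) ^ 2 / εzy)) := by
        have hng : -( (qm (Sum.inr (z, y)) - qn (Sum.inr (z, y))) ^ 2 / εzy) ≤ T := by
          have := neg_abs_le T
          linarith
        nlinarith [hπ0 y, mul_le_mul_of_nonneg_left hng (hπ0 y)]
      have h2 : π y * ((qm (Sum.inr (z, y)) - qn (Sum.inr (z, y))) ^ 2 / εzy)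
          ≤ σG / 2 * (qm (Sum.inr (z, y)) - qn (Sum.inr (z, y))) ^ 2 := by
        have hstep : π y * ((qm (Sum.inr (z, y)) - qn (Sum.inr (z, y))) ^ 2 / εzy)
            ≤ 1 / εzy * (qm (Sum.inr (z, y)) - qn (Sum.inr (z, y))) ^ 2 := by
          have h1le := hπle1 y
          have hnn : (0:ℝ) ≤ (qm (Sum.inr (z, y)) - qn (Sum.inr (z, y))) ^ 2 / εzy :=
            div_nonneg (sq_nonneg _) hεzy.le
          have hfact := mul_nonneg (by linarith : (0:ℝ) ≤ 1 - π y) hnn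
          have hid : 1 / εzy * (qm (Sum.inr (z, y)) - qn (Sum.inr (z, y))) ^ 2
              = (qm (Sum.inr (z, y)) - qn (Sum.inr (z, y))) ^ 2 / εzy := by ring
          nlinarith
        exact le_trans hstep (mul_le_mul_of_nonneg_right hB (sq_nonneg _))
      simpa [hw] using le_trans (by linarith) h1
  have hsum : ∑ i, w i * ((-(qm i * Real.log (qm i))) - (-(qn i * Real.log (qn i)))
      - (-(Real.log (qn i) + 1)) * (qm i - qn i))
      ≥ ∑ i, -(σG / 2 * (qm i - qn i) ^ 2) :=
    Finset.sum_le_sum fun i _ => hkey i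
  have hsplit : G qm - G qn - ⟪gradient G qn, qm - qn⟫
      = ∑ i, w i * ((-(qm i * Real.log (qm i))) - (-(qn i * Real.log (qn i)))
        - (-(Real.log (qn i) + 1)) * (qm i - qn i)) := by
    rw [hGfun qm, hGfun qn, hinner, ← Finset.sum_sub_distrib, ← Finset.sum_sub_distrib]
    apply Finset.sum_congr rfl
    intro i _
    simp only [hgr, PiLp.toLp_apply]
    ring
  have hfin : ∑ i, -(σG / 2 * (qm i - qn i) ^ 2) = -(σG / 2 * ‖qm - qn‖ ^ 2) := by
    rw [hnorm, Finset.mul_sum, ← Finset.sum_neg_distrib]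
  rw [ge_iff_le, ← sub_nonneg]
  have : G qm - G qn - ⟪gradient G qn, qm - qn⟫ ≥ -(σG / 2 * ‖qm - qn‖ ^ 2) := by
    rw [hsplit, ← hfin]; exact hsum
  rw [hσG] at this
  linarith
end

section
/- Let p and q be probability vectors on a finite set of size N with all entries strictly positive. Then the negative entropy satisfies the strong-convexity inequality Σ_i p_i log p_i − Σ_i q_i log q_i ≥ ⟨log q + 1, p − q⟩ + (1/2)‖p − q‖₂², where log q + 1 is the vector with entries log q_i + 1. -/
open Real Set

/-- For `0 < x ≤ 1`, `log x ≤ (x - 1) - (x - 1)^2 / 2`. -/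
lemma aux_log_le {x : ℝ} (hx0 : 0 < x) (hx1 : x ≤ 1) :
    Real.log x ≤ (x - 1) - (x - 1) ^ 2 / 2 := by
  set f : ℝ → ℝ := fun y => (y - 1) - (y - 1) ^ 2 / 2 - Real.log y with hf
  have hderiv : ∀ y ∈ Ioi (0 : ℝ), HasDerivAt f (1 - (y - 1) - 1 / y) y := by
    intro y hy
    have h1 : HasDerivAt (fun y : ℝ => (y - 1) - (y - 1) ^ 2 / 2)
        (1 - (y - 1)) y := by
      have : HasDerivAt (fun y : ℝ => (y - 1) - (y - 1) ^ 2 / 2)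
          (1 - (2 * (y - 1) ^ 1 * 1) / 2) y := by
        exact ((hasDerivAt_id y).sub_const 1).sub
          ((((hasDerivAt_id y).sub_const 1).pow 2).div_const 2)
      convert this using 1; ring
    have h2 : HasDerivAt Real.log (1 / y) y := by
      simpa [one_div] using Real.hasDerivAt_log (ne_of_gt (mem_Ioi.mp hy))
    exact h1.sub h2
  have hanti : AntitoneOn f (Ioi (0 : ℝ)) := by
    apply antitoneOn_of_deriv_nonpos (convex_Ioi 0)
    · exact fun y hy => ((hderiv y hy).continuousAt).continuousWithinAt
    · intro y hy
      rw [interior_Ioi] at hy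
      exact ((hderiv y hy).differentiableAt).differentiableWithinAt
    · intro y hy
      rw [interior_Ioi] at hy
      rw [(hderiv y hy).deriv]
      have hy0 : (0 : ℝ) < y := hy
      have : 1 - (y - 1) - 1 / y = -((y - 1) ^ 2 / y) := by
        field_simp; ring
      rw [this]
      exact neg_nonpos.mpr (div_nonneg (sq_nonneg _) hy0.le)
  have h01 : (1 : ℝ) ∈ Ioi (0 : ℝ) := by norm_num
  have := hanti (mem_Ioi.mpr hx0) h01 hx1
  simp only [hf, Real.log_one] at this
  norm_num at this
  linarith

/-- For `0 < t ≤ 1`, `t * log t ≥ (t - 1) + (t - 1)^2 / 2`. -/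
lemma aux_mul_log_ge {t : ℝ} (ht0 : 0 < t) (ht1 : t ≤ 1) :
    t * Real.log t ≥ (t - 1) + (t - 1) ^ 2 / 2 := by
  set g : ℝ → ℝ := fun y => y * Real.log y - (y - 1) - (y - 1) ^ 2 / 2 with hg
  have hderiv : ∀ y ∈ Ioi (0 : ℝ), HasDerivAt g ((Real.log y + 1) - 1 - (y - 1)) y := by
    intro y hy
    have hy0 : (0 : ℝ) < y := hy
    have h2 : HasDerivAt (fun y : ℝ => y * Real.log y) (Real.log y + 1) y := by
      have := (hasDerivAt_id y).mul (Real.hasDerivAt_log hy0.ne')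
      refine this.congr_deriv ?_
      simp [hy0.ne']
    have h1 : HasDerivAt (fun y : ℝ => (y - 1) ^ 2 / 2) (2 * (y - 1) ^ 1 * 1 / 2) y :=
      (((hasDerivAt_id y).sub_const 1).pow 2).div_const 2
    have := (h2.sub ((hasDerivAt_id y).sub_const 1)).sub h1
    refine this.congr_deriv ?_
    ring
  have hanti : AntitoneOn g (Ioi (0 : ℝ)) := by
    apply antitoneOn_of_deriv_nonpos (convex_Ioi 0)
    · exact fun y hy => ((hderiv y hy).continuousAt).continuousWithinAt
    · intro y hy
      rw [interior_Ioi] at hy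
      exact ((hderiv y hy).differentiableAt).differentiableWithinAt
    · intro y hy
      rw [interior_Ioi] at hy
      rw [(hderiv y hy).deriv]
      have := Real.log_le_sub_one_of_pos (show (0:ℝ) < y from hy)
      linarith
  have h01 : (1 : ℝ) ∈ Ioi (0 : ℝ) := by norm_num
  have := hanti (mem_Ioi.mpr ht0) h01 ht1
  simp only [hg, Real.log_one] at this
  norm_num at this
  linarith

/-- Pointwise strong convexity inequality for entries in `(0, 1]`. -/
lemma aux_pointwise {a b : ℝ} (ha0 : 0 < a) (ha1 : a ≤ 1) (hb0 : 0 < b) (hb1 : b ≤ 1) :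
    a * Real.log a - b * Real.log b ≥ (Real.log b + 1) * (a - b) + (a - b) ^ 2 / 2 := by
  have key : a * Real.log a - a * Real.log b ≥ (a - b) + (a - b) ^ 2 / 2 := by
    rcases le_or_gt a b with hab | hab
    · -- a ≤ b : use t = a / b
      have ht0 : 0 < a / b := div_pos ha0 hb0
      have ht1 : a / b ≤ 1 := (div_le_one hb0).mpr hab
      have h := aux_mul_log_ge ht0 ht1
      have hlog : Real.log (a / b) = Real.log a - Real.log b :=
        Real.log_div ha0.ne' hb0.ne'
      -- multiply by b
      have h2 : b * ((a / b) * Real.log (a / b)) ≥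
          b * ((a / b - 1) + (a / b - 1) ^ 2 / 2) := by
        exact mul_le_mul_of_nonneg_left h hb0.le
      rw [hlog] at h2
      have e1 : b * ((a / b) * (Real.log a - Real.log b))
          = a * Real.log a - a * Real.log b := by
        field_simp
      have e2 : b * ((a / b - 1) + (a / b - 1) ^ 2 / 2)
          = (a - b) + (a - b) ^ 2 / (2 * b) := by
        field_simp
      rw [e1, e2] at h2
      have h3 : (a - b) ^ 2 / (2 * b) ≥ (a - b) ^ 2 / 2 := by
        apply div_le_div_of_nonneg_left (sq_nonneg _) (by positivity)
        linarith
      linarith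
    · -- b < a : use x = b / a
      have hx0 : 0 < b / a := div_pos hb0 ha0
      have hx1 : b / a ≤ 1 := (div_le_one ha0).mpr hab.le
      have h := aux_log_le hx0 hx1
      have hlog : Real.log (b / a) = Real.log b - Real.log a :=
        Real.log_div hb0.ne' ha0.ne'
      rw [hlog] at h
      -- multiply by a
      have h2 : a * (Real.log b - Real.log a) ≤
          a * ((b / a - 1) - (b / a - 1) ^ 2 / 2) :=
        mul_le_mul_of_nonneg_left h ha0.le
      have e2 : a * ((b / a - 1) - (b / a - 1) ^ 2 / 2)
          = (b - a) - (a - b) ^ 2 / (2 * a) := by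
        field_simp; ring
      rw [e2] at h2
      have h3 : (a - b) ^ 2 / (2 * a) ≥ (a - b) ^ 2 / 2 := by
        apply div_le_div_of_nonneg_left (sq_nonneg _) (by positivity)
        linarith
      nlinarith
  nlinarith

/-- For probability vectors `p, q` on a finite set of size `N` with strictly
positive entries, the negative entropy is `1`-strongly convex on the simplex with respect to
the Euclidean norm:
`∑ p_i log p_i − ∑ q_i log q_i ≥ ⟨log q + 1, p − q⟩ + (1/2) ‖p − q‖₂²`. -/
theorem statement7 {N : ℕ} (p q : Fin N → ℝ)
    (hp0 : ∀ i, 0 < p i) (hq0 : ∀ i, 0 < q i)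
    (hp1 : ∑ i, p i = 1) (hq1 : ∑ i, q i = 1) :
    (∑ i, p i * Real.log (p i)) - ∑ i, q i * Real.log (q i)
      ≥ (∑ i, (Real.log (q i) + 1) * (p i - q i)) + (1 / 2) * ∑ i, (p i - q i) ^ 2 := by
  have hple : ∀ i, p i ≤ 1 := by
    intro i
    rw [← hp1]
    exact Finset.single_le_sum (fun j _ => (hp0 j).le) (Finset.mem_univ i)
  have hqle : ∀ i, q i ≤ 1 := by
    intro i
    rw [← hq1]
    exact Finset.single_le_sum (fun j _ => (hq0 j).le) (Finset.mem_univ i)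
  have key : ∀ i, p i * Real.log (p i) - q i * Real.log (q i)
      ≥ (Real.log (q i) + 1) * (p i - q i) + (p i - q i) ^ 2 / 2 := fun i =>
    aux_pointwise (hp0 i) (hple i) (hq0 i) (hqle i)
  have hsum := Finset.sum_le_sum (fun i (_ : i ∈ Finset.univ) => key i)
  simp only [Finset.sum_add_distrib, Finset.sum_sub_distrib, Finset.sum_div] at hsum
  rw [ge_iff_le]
  calc (∑ i, (Real.log (q i) + 1) * (p i - q i)) + (1 / 2) * ∑ i, (p i - q i) ^ 2
      = (∑ i, (Real.log (q i) + 1) * (p i - q i)) + (∑ i, (p i - q i) ^ 2) / 2 := by ring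
    _ ≤ _ := by
        have hdiv : ∑ i, (p i - q i) ^ 2 / 2 = (∑ i, (p i - q i) ^ 2) / 2 :=
          (Finset.sum_div _ _ _).symm
        linarith [hsum]
end

section
/- Let F : ℝ^n → ℝ be convex and differentiable, let A ∈ ℝ^{m×n}, let ν, q ∈ ℝ^m and c > 0, and define L(p) = F(p) + ⟨ν, Ap − q⟩ + (c/2)‖Ap − q‖². Suppose p' ∈ ℝ^n satisfies the first-order condition ∇F(p') + Aᵀ(ν + c(Ap' − q)) = 0. Then for every p ∈ ℝ^n, L(p) − L(p') ≥ (c/2)‖Ap − Ap'‖². -/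
open Matrix RealInnerProductSpace

private lemma grad_ineq {E : Type*} [NormedAddCommGroup E] [InnerProductSpace ℝ E]
    [CompleteSpace E] (F : E → ℝ) (hconv : ConvexOn ℝ Set.univ F)
    (hdiff : Differentiable ℝ F) (x y : E) :
    ⟪gradient F x, y - x⟫ ≤ F y - F x := by
  set g : ℝ → ℝ := fun t => F (x + t • (y - x)) with hg
  have hgc : ConvexOn ℝ Set.univ g := by
    have h := hconv.comp_affineMap (AffineMap.lineMap x y : ℝ →ᵃ[ℝ] E)
    have : (F ∘ (AffineMap.lineMap x y : ℝ →ᵃ[ℝ] E)) = g := by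
      funext t
      simp [g, AffineMap.lineMap_apply, add_comm]
    rw [this] at h
    simpa using h
  have hderiv : HasDerivAt g ⟪gradient F x, y - x⟫ 0 := by
    have h1 : HasDerivAt (fun t : ℝ => x + t • (y - x)) (y - x) 0 := by
      simpa using ((hasDerivAt_id (0 : ℝ)).smul_const (y - x)).const_add x
    have h3 : HasFDerivAt F ((InnerProductSpace.toDual ℝ E) (gradient F x) : E →L[ℝ] ℝ) x :=
      (hdiff x).hasGradientAt.hasFDerivAt
    have h4 : HasFDerivAt F ((InnerProductSpace.toDual ℝ E) (gradient F x) : E →L[ℝ] ℝ)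
        (x + (0 : ℝ) • (y - x)) := by simpa using h3
    have := h4.comp_hasDerivAt 0 h1
    exact this.congr_deriv (by simp [InnerProductSpace.toDual_apply_apply])
  have hs := hgc.le_slope_of_hasDerivAt (Set.mem_univ 0) (Set.mem_univ 1) one_pos hderiv
  have : slope g 0 1 = F y - F x := by
    simp [slope_def_field, g]
  linarith [hs, this ▸ hs]

/-- Per-view primal-block sufficient decrease inequality for consensus ADMM:
if `F : ℝⁿ → ℝ` is convex and differentiable, `A ∈ ℝ^{m×n}`, `ν, q ∈ ℝᵐ`, `c > 0`,
`L(p) = F(p) + ⟨ν, Ap − q⟩ + (c/2)‖Ap − q‖²`, and `p'` satisfies the first-order condition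
`∇F(p') + Aᵀ(ν + c(Ap' − q)) = 0`, then `L(p) − L(p') ≥ (c/2)‖Ap − Ap'‖²` for every `p`. -/
theorem statement8 {n m : ℕ} (F : EuclideanSpace ℝ (Fin n) → ℝ)
    (hFconv : ConvexOn ℝ Set.univ F) (hFdiff : Differentiable ℝ F)
    (A : Matrix (Fin m) (Fin n) ℝ) (ν q : EuclideanSpace ℝ (Fin m)) (c : ℝ) (hc : 0 < c)
    (L : EuclideanSpace ℝ (Fin n) → ℝ)
    (hL : ∀ p, L p = F p + ⟪ν, Matrix.toEuclideanLin A p - q⟫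
        + c / 2 * ‖Matrix.toEuclideanLin A p - q‖ ^ 2)
    (p' : EuclideanSpace ℝ (Fin n))
    (hopt : gradient F p'
        + Matrix.toEuclideanLin Aᵀ (ν + c • (Matrix.toEuclideanLin A p' - q)) = 0) :
    ∀ p, L p - L p' ≥ c / 2 * ‖Matrix.toEuclideanLin A p - Matrix.toEuclideanLin A p'‖ ^ 2 := by
  intro p
  set B := Matrix.toEuclideanLin A with hB
  set w : EuclideanSpace ℝ (Fin m) := ν + c • (B p' - q) with hw
  set d : EuclideanSpace ℝ (Fin m) := B p - B p' with hd
  have key := grad_ineq F hFconv hFdiff p' p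
  have hgrad : gradient F p' = - Matrix.toEuclideanLin Aᵀ w :=
    eq_neg_of_add_eq_zero_left hopt
  have hT : Matrix.toEuclideanLin Aᵀ = LinearMap.adjoint B := by
    rw [hB, ← Matrix.toEuclideanLin_conjTranspose_eq_adjoint]
    congr 1
  have hadj : ⟪gradient F p', p - p'⟫ = -(⟪ν, d⟫ + c * ⟪B p' - q, d⟫) := by
    rw [hgrad, inner_neg_left, hT, LinearMap.adjoint_inner_left]
    rw [map_sub]
    rw [hw, inner_add_left, real_inner_smul_left]
  have hnorm : ‖B p - q‖ ^ 2
      = ‖B p' - q‖ ^ 2 + 2 * ⟪B p' - q, d⟫ + ‖d‖ ^ 2 := by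
    have h : B p - q = (B p' - q) + d := by rw [hd]; abel
    rw [h, norm_add_sq_real]
  have hinner : ⟪ν, B p - q⟫ = ⟪ν, B p' - q⟫ + ⟪ν, d⟫ := by
    rw [← inner_add_right]
    congr 1
    rw [hd]; abel
  rw [hL p, hL p']
  rw [hnorm, hinner]
  nlinarith [key, hadj ▸ key]
end

section
/- Let G : ℝ^m → ℝ be differentiable and σ_G-weakly convex, let V ∈ ℕ, c > 0, and for each i ∈ {1,…,V} let u_i, ν_i ∈ ℝ^m be fixed vectors. Define L(q) = G(q) + Σ_{i=1}^V [⟨ν_i, u_i − q⟩ + (c/2)‖u_i − q‖²]. Suppose q' ∈ ℝ^m satisfies the first-order condition ∇G(q') = Σ_{i=1}^V [ν_i + c(u_i − q')]. Then for every q ∈ ℝ^m, L(q) − L(q') ≥ ((cV − σ_G)/2)‖q − q'‖². -/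
open RealInnerProductSpace

/-- Augmented-variable block sufficient decrease inequality for consensus
ADMM: if `G : ℝᵐ → ℝ` is differentiable and `σ_G`-weakly convex, `c > 0`, `u_i, ν_i ∈ ℝᵐ`
for `i ∈ {1,…,V}`, `L(q) = G(q) + ∑_i [⟨ν_i, u_i − q⟩ + (c/2)‖u_i − q‖²]`, and `q'`
satisfies `∇G(q') = ∑_i [ν_i + c(u_i − q')]`, then
`L(q) − L(q') ≥ ((cV − σ_G)/2)‖q − q'‖²` for every `q`. -/
theorem statement9 {m : ℕ} (G : EuclideanSpace ℝ (Fin m) → ℝ) (σG : ℝ)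
    (hGdiff : Differentiable ℝ G)
    (hGweak : ∀ x y : EuclideanSpace ℝ (Fin m),
      G y ≥ G x + ⟪gradient G x, y - x⟫ - σG / 2 * ‖y - x‖ ^ 2)
    (V : ℕ) (c : ℝ) (hc : 0 < c)
    (u ν : Fin V → EuclideanSpace ℝ (Fin m))
    (L : EuclideanSpace ℝ (Fin m) → ℝ)
    (hL : ∀ q, L q = G q + ∑ i, (⟪ν i, u i - q⟫ + c / 2 * ‖u i - q‖ ^ 2))
    (q' : EuclideanSpace ℝ (Fin m))
    (hopt : gradient G q' = ∑ i, (ν i + c • (u i - q'))) :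
    ∀ q, L q - L q' ≥ (c * V - σG) / 2 * ‖q - q'‖ ^ 2 := by
  intro q
  have hw := hGweak q' q
  have hterm : ∀ i : Fin V,
      (⟪ν i, u i - q⟫ + c / 2 * ‖u i - q‖ ^ 2)
        - (⟪ν i, u i - q'⟫ + c / 2 * ‖u i - q'‖ ^ 2)
      = ⟪ν i + c • (u i - q'), q' - q⟫ + c / 2 * ‖q - q'‖ ^ 2 := by
    intro i
    simp only [@norm_sub_sq_real, inner_add_left, inner_sub_left, inner_sub_right,
      real_inner_smul_left, real_inner_comm (u i) q, real_inner_comm (u i) q',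
      real_inner_comm q' q, real_inner_self_eq_norm_sq]
    ring
  have hsum : (∑ i, (⟪ν i, u i - q⟫ + c / 2 * ‖u i - q‖ ^ 2))
      - (∑ i, (⟪ν i, u i - q'⟫ + c / 2 * ‖u i - q'‖ ^ 2))
      = ⟪gradient G q', q' - q⟫ + (V : ℝ) * (c / 2 * ‖q - q'‖ ^ 2) := by
    rw [← Finset.sum_sub_distrib]
    simp only [hterm]
    rw [Finset.sum_add_distrib, ← sum_inner, ← hopt, Finset.sum_const, Finset.card_univ,
      Fintype.card_fin, nsmul_eq_mul]
  have hip : ⟪gradient G q', q' - q⟫ = - ⟪gradient G q', q - q'⟫ := by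
    rw [← inner_neg_right, neg_sub]
  rw [hL q, hL q']
  have : G q + (∑ i, (⟪ν i, u i - q⟫ + c / 2 * ‖u i - q‖ ^ 2))
      - (G q' + ∑ i, (⟪ν i, u i - q'⟫ + c / 2 * ‖u i - q'‖ ^ 2))
      = (G q - G q') + (⟪gradient G q', q' - q⟫ + (V : ℝ) * (c / 2 * ‖q - q'‖ ^ 2)) := by
    rw [← hsum]; ring
  rw [this, hip]
  nlinarith [hw]
end

section
/- Let A ∈ ℝ^{m×n} have full row rank, and let F : ℝ^n → ℝ be differentiable with L-Lipschitz gradient. Suppose p, p' ∈ ℝ^n and ν, ν' ∈ ℝ^m satisfy ∇F(p) = −Aᵀν and ∇F(p') = −Aᵀν'. Then ‖ν − ν'‖ ≤ (λ_A L/μ_{AAᵀ})‖p − p'‖, where λ_A is the largest singular value of A, μ_{AAᵀ} is the smallest singular value of AAᵀ, and ‖·‖ is the Euclidean norm. -/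
open Matrix

/-- The largest singular value of a real matrix `A`, via its variational characterization
`λ_A = sup_{‖x‖=1} ‖Ax‖` (Euclidean norms). -/
noncomputable def maxSingularValue {m n : ℕ} (A : Matrix (Fin m) (Fin n) ℝ) : ℝ :=
  sSup {r : ℝ | ∃ x : EuclideanSpace ℝ (Fin n), ‖x‖ = 1 ∧ r = ‖Matrix.toEuclideanLin A x‖}

/-- The smallest singular value of a square real matrix `B`, via its variational
characterization `μ_B = inf_{‖x‖=1} ‖Bx‖` (Euclidean norms). -/
noncomputable def minSingularValue {k : ℕ} (B : Matrix (Fin k) (Fin k) ℝ) : ℝ :=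
  sInf {r : ℝ | ∃ x : EuclideanSpace ℝ (Fin k), ‖x‖ = 1 ∧ r = ‖Matrix.toEuclideanLin B x‖}

lemma aux_max_bound {m n : ℕ} (A : Matrix (Fin m) (Fin n) ℝ) (x : EuclideanSpace ℝ (Fin n)) :
    ‖Matrix.toEuclideanLin A x‖ ≤ maxSingularValue A * ‖x‖ := by
  rcases eq_or_ne x 0 with rfl | hx
  · simp
  have hxn : (0:ℝ) < ‖x‖ := norm_pos_iff.mpr hx
  set f := (Matrix.toEuclideanLin A).toContinuousLinearMap with hf
  have hbdd : BddAbove {r : ℝ | ∃ x : EuclideanSpace ℝ (Fin n), ‖x‖ = 1 ∧ r = ‖Matrix.toEuclideanLin A x‖} := by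
    refine ⟨‖f‖, ?_⟩
    rintro r ⟨y, hy, rfl⟩
    calc ‖Matrix.toEuclideanLin A y‖ = ‖f y‖ := rfl
      _ ≤ ‖f‖ * ‖y‖ := f.le_opNorm y
      _ = ‖f‖ := by rw [hy, mul_one]
  have hmem : ‖Matrix.toEuclideanLin A (‖x‖⁻¹ • x)‖ ≤ maxSingularValue A :=
    le_csSup hbdd ⟨‖x‖⁻¹ • x, by simp [norm_smul, abs_of_pos, hxn, inv_mul_cancel₀ hxn.ne'], rfl⟩
  have : ‖Matrix.toEuclideanLin A (‖x‖⁻¹ • x)‖ = ‖x‖⁻¹ * ‖Matrix.toEuclideanLin A x‖ := by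
    rw [_root_.map_smul, norm_smul]
    simp [abs_of_pos, hxn]
  rw [this] at hmem
  calc ‖Matrix.toEuclideanLin A x‖ = ‖x‖ * (‖x‖⁻¹ * ‖Matrix.toEuclideanLin A x‖) := by
        field_simp
    _ ≤ ‖x‖ * maxSingularValue A := by
        exact mul_le_mul_of_nonneg_left hmem hxn.le
    _ = maxSingularValue A * ‖x‖ := mul_comm _ _

lemma aux_min_bound {k : ℕ} (B : Matrix (Fin k) (Fin k) ℝ) (x : EuclideanSpace ℝ (Fin k)) :
    minSingularValue B * ‖x‖ ≤ ‖Matrix.toEuclideanLin B x‖ := by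
  rcases eq_or_ne x 0 with rfl | hx
  · simp
  have hxn : (0:ℝ) < ‖x‖ := norm_pos_iff.mpr hx
  have hbdd : BddBelow {r : ℝ | ∃ x : EuclideanSpace ℝ (Fin k), ‖x‖ = 1 ∧ r = ‖Matrix.toEuclideanLin B x‖} :=
    ⟨0, by rintro r ⟨y, hy, rfl⟩; positivity⟩
  have hmem : minSingularValue B ≤ ‖Matrix.toEuclideanLin B (‖x‖⁻¹ • x)‖ :=
    csInf_le hbdd ⟨‖x‖⁻¹ • x, by simp [norm_smul, abs_of_pos, hxn, inv_mul_cancel₀ hxn.ne'], rfl⟩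
  have heq : ‖Matrix.toEuclideanLin B (‖x‖⁻¹ • x)‖ = ‖x‖⁻¹ * ‖Matrix.toEuclideanLin B x‖ := by
    rw [_root_.map_smul, norm_smul]; simp [abs_of_pos, hxn]
  rw [heq] at hmem
  calc minSingularValue B * ‖x‖ ≤ (‖x‖⁻¹ * ‖Matrix.toEuclideanLin B x‖) * ‖x‖ :=
        mul_le_mul_of_nonneg_right hmem hxn.le
    _ = ‖Matrix.toEuclideanLin B x‖ := by field_simp

lemma aux_min_pos {k : ℕ} (hk : 0 < k) (B : Matrix (Fin k) (Fin k) ℝ) (h : B.rank = k) :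
    0 < minSingularValue B := by
  have hinj : Function.Injective (Matrix.toEuclideanLin B) := by
    have hsurj : Function.Surjective B.mulVecLin := by
      rw [← LinearMap.range_eq_top]
      apply Submodule.eq_top_of_finrank_eq
      rw [← Matrix.rank, h]; simp
    have hinj : Function.Injective B.mulVecLin :=
      (LinearMap.injective_iff_surjective).mpr hsurj
    intro x y hxy
    have h2 : B.mulVecLin (WithLp.equiv 2 _ x) = B.mulVecLin (WithLp.equiv 2 _ y) := by
      have := congrArg (WithLp.equiv 2 (Fin k → ℝ)) hxy
      simp only [WithLp.equiv_apply, Matrix.ofLp_toEuclideanLin_apply] at this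
      simpa [Matrix.mulVecLin_apply] using this
    exact (WithLp.equiv 2 _).injective (hinj h2)
  set S := {r : ℝ | ∃ x : EuclideanSpace ℝ (Fin k), ‖x‖ = 1 ∧ r = ‖Matrix.toEuclideanLin B x‖}
  have hSne : S.Nonempty := by
    have : ∃ x : EuclideanSpace ℝ (Fin k), ‖x‖ = 1 := by
      refine ⟨‖(EuclideanSpace.single ⟨0, hk⟩ (1:ℝ) : EuclideanSpace ℝ (Fin k))‖⁻¹ •
        EuclideanSpace.single ⟨0, hk⟩ (1:ℝ), ?_⟩
      have : ‖(EuclideanSpace.single ⟨0, hk⟩ (1:ℝ) : EuclideanSpace ℝ (Fin k))‖ = 1 := by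
        simp [EuclideanSpace.norm_single]
      rw [norm_smul, this]; simp
    obtain ⟨x, hx⟩ := this
    exact ⟨_, x, hx, rfl⟩
  -- S is compact image of compact sphere
  have hScomp : IsCompact S := by
    have : S = (fun x : EuclideanSpace ℝ (Fin k) => ‖Matrix.toEuclideanLin B x‖) ''
        Metric.sphere 0 1 := by
      ext r
      constructor
      · rintro ⟨x, hx, rfl⟩; exact ⟨x, by simpa using hx, rfl⟩
      · rintro ⟨x, hx, rfl⟩; exact ⟨x, by simpa using hx, rfl⟩
    rw [this]
    exact (isCompact_sphere 0 1).image (by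
      exact Continuous.norm (Matrix.toEuclideanLin B).toContinuousLinearMap.continuous)
  have hmem := hScomp.sInf_mem hSne
  obtain ⟨x, hx1, hx2⟩ := hmem
  rw [show minSingularValue B = sInf S from rfl, hx2]
  have hxne : x ≠ 0 := by intro h0; rw [h0] at hx1; simp at hx1
  have : Matrix.toEuclideanLin B x ≠ 0 := by
    intro h0
    exact hxne (hinj (by rw [h0, map_zero]))
  exact norm_pos_iff.mpr this

/-- If `A ∈ ℝ^{m×n}` has full row rank, `F : ℝⁿ → ℝ` is differentiable
with `L`-Lipschitz gradient, and `∇F(p) = −Aᵀν`, `∇F(p') = −Aᵀν'`, then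
`‖ν − ν'‖ ≤ (λ_A L / μ_{AAᵀ}) ‖p − p'‖`. -/
theorem statement11 {m n : ℕ} (A : Matrix (Fin m) (Fin n) ℝ) (hrank : A.rank = m)
    (F : EuclideanSpace ℝ (Fin n) → ℝ) (hFdiff : Differentiable ℝ F) (L : ℝ)
    (hLip : ∀ x y : EuclideanSpace ℝ (Fin n),
      ‖gradient F x - gradient F y‖ ≤ L * ‖x - y‖)
    (p p' : EuclideanSpace ℝ (Fin n)) (ν ν' : EuclideanSpace ℝ (Fin m))
    (h1 : gradient F p = -(Matrix.toEuclideanLin Aᵀ ν))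
    (h2 : gradient F p' = -(Matrix.toEuclideanLin Aᵀ ν')) :
    ‖ν - ν'‖ ≤ maxSingularValue A * L / minSingularValue (A * Aᵀ) * ‖p - p'‖ := by
  rcases Nat.eq_zero_or_pos m with rfl | hm
  · have hν : ν = ν' := Subsingleton.elim _ _
    have hmin : minSingularValue (A * Aᵀ) = 0 := by
      have : {r : ℝ | ∃ x : EuclideanSpace ℝ (Fin 0), ‖x‖ = 1 ∧
          r = ‖Matrix.toEuclideanLin (A * Aᵀ) x‖} = ∅ := by
        ext r
        simp only [Set.mem_setOf_eq, Set.mem_empty_iff_false, iff_false]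
        rintro ⟨x, hx, -⟩
        have : x = 0 := Subsingleton.elim _ _
        rw [this] at hx; simp at hx
      rw [minSingularValue, this, Real.sInf_empty]
    rw [hν, hmin]
    simp
  -- main case
  have hμ : 0 < minSingularValue (A * Aᵀ) := by
    apply aux_min_pos hm
    rw [Matrix.rank_self_mul_transpose, hrank]
  have hlam : 0 ≤ maxSingularValue A := by
    apply Real.sSup_nonneg
    rintro r ⟨x, hx, rfl⟩
    positivity
  set w := ν - ν' with hw
  have hkey : Matrix.toEuclideanLin Aᵀ w = gradient F p' - gradient F p := by
    rw [hw, map_sub, h1, h2]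
    abel
  have h3 : ‖Matrix.toEuclideanLin Aᵀ w‖ ≤ L * ‖p - p'‖ := by
    rw [hkey, norm_sub_rev]
    exact hLip p p'
  have h4 : Matrix.toEuclideanLin (A * Aᵀ) w = Matrix.toEuclideanLin A (Matrix.toEuclideanLin Aᵀ w) := by
    simp [Matrix.toEuclideanLin_apply, Matrix.mulVec_mulVec]
  have hchain : minSingularValue (A * Aᵀ) * ‖w‖ ≤ maxSingularValue A * (L * ‖p - p'‖) := by
    calc minSingularValue (A * Aᵀ) * ‖w‖ ≤ ‖Matrix.toEuclideanLin (A * Aᵀ) w‖ :=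
          aux_min_bound _ _
      _ = ‖Matrix.toEuclideanLin A (Matrix.toEuclideanLin Aᵀ w)‖ := by rw [h4]
      _ ≤ maxSingularValue A * ‖Matrix.toEuclideanLin Aᵀ w‖ := aux_max_bound _ _
      _ ≤ maxSingularValue A * (L * ‖p - p'‖) := mul_le_mul_of_nonneg_left h3 hlam
  rw [div_mul_eq_mul_div, le_div_iff₀ hμ]
  calc ‖w‖ * minSingularValue (A * Aᵀ) = minSingularValue (A * Aᵀ) * ‖w‖ := mul_comm _ _
    _ ≤ maxSingularValue A * (L * ‖p - p'‖) := hchain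
    _ = maxSingularValue A * L * ‖p - p'‖ := by ring
end

section
/- Let V ∈ ℕ, c > 0 with cV ≥ σ_G, and for each i ∈ {1,…,V} let A_i ∈ ℝ^{m×n_i}, let F_i : ℝ^{n_i} → ℝ be convex and differentiable, and let G : ℝ^m → ℝ be differentiable and σ_G-weakly convex. Define L_c({p_i},{ν_i},q) = Σ_{i=1}^V [F_i(p_i) + ⟨ν_i, A_i p_i − q⟩ + (c/2)‖A_i p_i − q‖²] + G(q). Suppose (p_i^*, ν_i^*, q^*) is a stationary point, i.e., A_i p_i^* = q^*, ∇F_i(p_i^*) = −A_iᵀν_i^* for all i, and ∇G(q^*) = Σ_{i=1}^V ν_i^*; and suppose (p_i, ν_i, q) satisfies ∇F_i(p_i) = −A_iᵀν_i for all i and ∇G(q) = Σ_{i=1}^V [ν_i + c(A_i p_i − q)]. Then L_c({p_i},{ν_i},q) − L_c({p_i^*},{ν_i^*},q^*) ≤ (c/2) Σ_{i=1}^V ‖A_i p_i − A_i p_i^*‖². -/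
open Matrix RealInnerProductSpace

lemma inner_gradient_eq_fderiv {E : Type*} [NormedAddCommGroup E] [InnerProductSpace ℝ E]
    [CompleteSpace E] (f : E → ℝ) (x v : E) :
    ⟪gradient f x, v⟫ = fderiv ℝ f x v := by
  rw [gradient, ← InnerProductSpace.toDual_apply_apply, LinearIsometryEquiv.apply_symm_apply]

lemma convex_grad_ineq {E : Type*} [NormedAddCommGroup E] [InnerProductSpace ℝ E]
    [CompleteSpace E] {f : E → ℝ} (hc : ConvexOn ℝ Set.univ f) (hd : Differentiable ℝ f)
    (x y : E) : f x + ⟪gradient f x, y - x⟫ ≤ f y := by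
  set v := y - x with hv
  have hline : HasDerivAt (fun t : ℝ => f (x + t • v)) (fderiv ℝ f x v) 0 := by
    have h1 : HasDerivAt (fun t : ℝ => x + t • v) v 0 := by
      simpa using ((hasDerivAt_id (0:ℝ)).smul_const v).const_add x
    have h2 := (hd (x + (0:ℝ) • v)).hasFDerivAt.comp_hasDerivAt 0 h1
    simp only [zero_smul, add_zero] at h2
    exact h2
  have hg : ConvexOn ℝ Set.univ (fun t : ℝ => f (x + t • v)) := by
    have h := hc.comp_affineMap (AffineMap.lineMap x y : ℝ →ᵃ[ℝ] E)
    simp only [Set.preimage_univ] at h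
    have e : (fun t : ℝ => f (x + t • v)) = f ∘ (AffineMap.lineMap x y : ℝ →ᵃ[ℝ] E) := by
      funext t
      simp only [Function.comp, AffineMap.lineMap_apply_module, hv]
      congr 1
      module
    rw [e]; exact h
  have hslope := hg.le_slope_of_hasDerivAt (Set.mem_univ (0:ℝ)) (Set.mem_univ (1:ℝ))
    one_pos hline
  rw [slope_def_field] at hslope
  simp only [one_smul, zero_smul, add_zero, sub_zero, div_one] at hslope
  have hxy : x + v = y := by rw [hv]; abel
  rw [hxy] at hslope
  have := inner_gradient_eq_fderiv f x v
  linarith [hslope, this.le, this.ge]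

lemma inner_toEuclideanLin_transpose {m k : ℕ} (A : Matrix (Fin m) (Fin k) ℝ)
    (u : EuclideanSpace ℝ (Fin m)) (w : EuclideanSpace ℝ (Fin k)) :
    ⟪Matrix.toEuclideanLin Aᵀ u, w⟫ = ⟪u, Matrix.toEuclideanLin A w⟫ := by
  rw [← Matrix.conjTranspose_eq_transpose_of_trivial,
    Matrix.toEuclideanLin_conjTranspose_eq_adjoint, LinearMap.adjoint_inner_left]

/-- Value-gap upper bound at ADMM iterates: for the consensus augmented
Lagrangian `L_c({p_i},{ν_i},q) = ∑_i [F_i(p_i) + ⟨ν_i, A_i p_i − q⟩ + (c/2)‖A_i p_i − q‖²]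
+ G(q)` with each `F_i` convex differentiable, `G` differentiable `σ_G`-weakly convex and
`cV ≥ σ_G`, if `(p_i^*, ν_i^*, q^*)` is a stationary point and `(p_i, ν_i, q)` satisfies the
first-order conditions `∇F_i(p_i) = −A_iᵀν_i` and `∇G(q) = ∑_i [ν_i + c(A_i p_i − q)]`,
then `L_c({p_i},{ν_i},q) − L_c({p_i^*},{ν_i^*},q^*) ≤ (c/2) ∑_i ‖A_i p_i − A_i p_i^*‖²`. -/
theorem statement13 {V m : ℕ} {n : Fin V → ℕ} (c σG : ℝ) (hc : 0 < c)
    (hcV : c * V ≥ σG)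
    (A : (i : Fin V) → Matrix (Fin m) (Fin (n i)) ℝ)
    (F : (i : Fin V) → EuclideanSpace ℝ (Fin (n i)) → ℝ)
    (hFconv : ∀ i, ConvexOn ℝ Set.univ (F i))
    (hFdiff : ∀ i, Differentiable ℝ (F i))
    (G : EuclideanSpace ℝ (Fin m) → ℝ) (hGdiff : Differentiable ℝ G)
    (hGweak : ∀ x y : EuclideanSpace ℝ (Fin m),
      G y ≥ G x + ⟪gradient G x, y - x⟫ - σG / 2 * ‖y - x‖ ^ 2)
    (Lc : ((i : Fin V) → EuclideanSpace ℝ (Fin (n i))) →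
      (Fin V → EuclideanSpace ℝ (Fin m)) → EuclideanSpace ℝ (Fin m) → ℝ)
    (hLc : ∀ p ν q, Lc p ν q =
      (∑ i, (F i (p i) + ⟪ν i, Matrix.toEuclideanLin (A i) (p i) - q⟫
        + c / 2 * ‖Matrix.toEuclideanLin (A i) (p i) - q‖ ^ 2)) + G q)
    (pstar : (i : Fin V) → EuclideanSpace ℝ (Fin (n i)))
    (νstar : Fin V → EuclideanSpace ℝ (Fin m)) (qstar : EuclideanSpace ℝ (Fin m))
    (hstat1 : ∀ i, Matrix.toEuclideanLin (A i) (pstar i) = qstar)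
    (hstat2 : ∀ i, gradient (F i) (pstar i) = -(Matrix.toEuclideanLin (A i)ᵀ (νstar i)))
    (hstat3 : gradient G qstar = ∑ i, νstar i)
    (p : (i : Fin V) → EuclideanSpace ℝ (Fin (n i)))
    (ν : Fin V → EuclideanSpace ℝ (Fin m)) (q : EuclideanSpace ℝ (Fin m))
    (h1 : ∀ i, gradient (F i) (p i) = -(Matrix.toEuclideanLin (A i)ᵀ (ν i)))
    (h2 : gradient G q = ∑ i, (ν i + c • (Matrix.toEuclideanLin (A i) (p i) - q))) :
    Lc p ν q - Lc pstar νstar qstar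
      ≤ c / 2 * ∑ i, ‖Matrix.toEuclideanLin (A i) (p i)
          - Matrix.toEuclideanLin (A i) (pstar i)‖ ^ 2 := by
  
  classical
  -- per-i inequality
  have key : ∀ i : Fin V,
      (F i (p i) + ⟪ν i, Matrix.toEuclideanLin (A i) (p i) - q⟫
        + c / 2 * ‖Matrix.toEuclideanLin (A i) (p i) - q‖ ^ 2)
      - (F i (pstar i) + ⟪νstar i, Matrix.toEuclideanLin (A i) (pstar i) - qstar⟫
        + c / 2 * ‖Matrix.toEuclideanLin (A i) (pstar i) - qstar‖ ^ 2)
      ≤ c / 2 * ‖Matrix.toEuclideanLin (A i) (p i)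
            - Matrix.toEuclideanLin (A i) (pstar i)‖ ^ 2
        - (⟪ν i, q - qstar⟫
            + c * ⟪Matrix.toEuclideanLin (A i) (p i) - q, q - qstar⟫)
        - c / 2 * ‖q - qstar‖ ^ 2 := by
    intro i
    have hconv := convex_grad_ineq (hFconv i) (hFdiff i) (p i) (pstar i)
    rw [h1 i] at hconv
    have hsplit : Matrix.toEuclideanLin (A i) (p i) - Matrix.toEuclideanLin (A i) (pstar i)
        = (Matrix.toEuclideanLin (A i) (p i) - q) + (q - qstar) := by
      rw [hstat1 i]; abel
    have hadj : ⟪-(Matrix.toEuclideanLin (A i)ᵀ (ν i)), pstar i - p i⟫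
        = ⟪ν i, Matrix.toEuclideanLin (A i) (p i) - q⟫ + ⟪ν i, q - qstar⟫ := by
      rw [inner_neg_left, inner_toEuclideanLin_transpose, map_sub, hstat1 i,
        ← inner_add_right]
      rw [show (Matrix.toEuclideanLin (A i) (p i) - q) + (q - qstar)
          = -(qstar - Matrix.toEuclideanLin (A i) (p i)) by abel, inner_neg_right]
    rw [hadj] at hconv
    have hstar0 : Matrix.toEuclideanLin (A i) (pstar i) - qstar = 0 := by
      rw [hstat1 i, sub_self]
    have hnorm : ‖Matrix.toEuclideanLin (A i) (p i)
          - Matrix.toEuclideanLin (A i) (pstar i)‖ ^ 2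
        = ‖Matrix.toEuclideanLin (A i) (p i) - q‖ ^ 2
          + 2 * ⟪Matrix.toEuclideanLin (A i) (p i) - q, q - qstar⟫
          + ‖q - qstar‖ ^ 2 := by
      rw [hsplit]; exact norm_add_sq_real _ _
    rw [hstar0, hnorm]
    simp only [inner_zero_right, norm_zero]
    nlinarith [hconv]
  have hsum := Finset.sum_le_sum (fun i (_ : i ∈ Finset.univ) => key i)
  rw [Finset.sum_sub_distrib] at hsum
  have hGd : ⟪gradient G q, q - qstar⟫
      = ∑ i, (⟪ν i, q - qstar⟫
          + c * ⟪Matrix.toEuclideanLin (A i) (p i) - q, q - qstar⟫) := by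
    rw [h2, sum_inner]
    refine Finset.sum_congr rfl fun i _ => ?_
    rw [inner_add_left, real_inner_smul_left]
  have hRHS : ∑ i, (c / 2 * ‖Matrix.toEuclideanLin (A i) (p i)
            - Matrix.toEuclideanLin (A i) (pstar i)‖ ^ 2
        - (⟪ν i, q - qstar⟫
            + c * ⟪Matrix.toEuclideanLin (A i) (p i) - q, q - qstar⟫)
        - c / 2 * ‖q - qstar‖ ^ 2)
      = c / 2 * ∑ i, ‖Matrix.toEuclideanLin (A i) (p i)
            - Matrix.toEuclideanLin (A i) (pstar i)‖ ^ 2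
        - ⟪gradient G q, q - qstar⟫ - (V : ℝ) * (c / 2 * ‖q - qstar‖ ^ 2) := by
    rw [Finset.sum_sub_distrib, Finset.sum_sub_distrib, ← Finset.mul_sum, ← hGd,
      Finset.sum_const, Finset.card_univ, Fintype.card_fin, nsmul_eq_mul]
  rw [hRHS] at hsum
  have hGq : G q - G qstar ≤ ⟪gradient G q, q - qstar⟫ + σG / 2 * ‖q - qstar‖ ^ 2 := by
    have hw := hGweak q qstar
    have hn : ‖qstar - q‖ = ‖q - qstar‖ := norm_sub_rev _ _
    have hi : ⟪gradient G q, qstar - q⟫ = -⟪gradient G q, q - qstar⟫ := by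
      rw [show qstar - q = -(q - qstar) by abel, inner_neg_right]
    rw [hn, hi] at hw
    linarith
  have hd2 : (0:ℝ) ≤ ‖q - qstar‖ ^ 2 := sq_nonneg _
  have habsorb : σG * ‖q - qstar‖ ^ 2 ≤ c * V * ‖q - qstar‖ ^ 2 :=
    mul_le_mul_of_nonneg_right hcV hd2
  rw [hLc p ν q, hLc pstar νstar qstar]
  linarith
end

section
/- Let V ∈ ℕ, c > 0 with cV ≥ σ_G, and for each i ∈ {1,…,V} let A_i ∈ ℝ^{m×n_i}, let F_i : ℝ^{n_i} → ℝ be convex and differentiable, and let G : ℝ^m → ℝ be differentiable and σ_G-weakly convex. Define L_c({p_i},{ν_i},q) = Σ_{i=1}^V [F_i(p_i) + ⟨ν_i, A_i p_i − q⟩ + (c/2)‖A_i p_i − q‖²] + G(q), and let w* = ({p_i^*},{ν_i^*},q^*) be a stationary point (A_i p_i^* = q^*, ∇F_i(p_i^*) = −A_iᵀν_i^* for all i, ∇G(q^*) = Σ_i ν_i^*). Suppose w = ({p_i},{ν_i},q) satisfies ∇F_i(p_i) = −A_iᵀν_i for all i and ∇G(q) = Σ_{i=1}^V [ν_i + c(A_i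 p_i − q)], together with ‖A_i p_i − A_i p_i^*‖ ≤ ε for all i and ‖∇L_c(w)‖ ≥ η for some ε, η > 0. Then L_c(w) − L_c(w*) ≤ (1 + cVε²/(2η²))‖∇L_c(w)‖²; in particular (L_c(w) − L_c(w*))^{1/2} ≤ C‖∇L_c(w)‖ with C = (1 + cVε²/(2η²))^{1/2}, i.e., L_c satisfies the Łojasiewicz inequality with exponent θ = 1/2 in this neighborhood of w*. -/
open Matrix RealInnerProductSpace

lemma convex_grad_aux {E : Type*} [NormedAddCommGroup E] [InnerProductSpace ℝ E]
    [CompleteSpace E] {f : E → ℝ} (hconv : ConvexOn ℝ Set.univ f)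
    (hdiff : Differentiable ℝ f) (x y : E) :
    f x + ⟪gradient f x, y - x⟫ ≤ f y := by
  have hline : HasDerivAt (fun s : ℝ => x + s • (y - x)) (y - x) 0 := by
    simpa using ((hasDerivAt_id (0:ℝ)).smul_const (y - x)).const_add x
  have hF : HasFDerivAt f (InnerProductSpace.toDual ℝ E (gradient f x)) x :=
    hasGradientAt_iff_hasFDerivAt.mp (hdiff x).hasGradientAt
  have hF' : HasFDerivAt f (InnerProductSpace.toDual ℝ E (gradient f x))
      ((fun s : ℝ => x + s • (y - x)) 0) := by simpa using hF
  have hφ : HasDerivAt (fun t : ℝ => f (x + t • (y - x))) ⟪gradient f x, y - x⟫ 0 := by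
    exact (hF'.comp_hasDerivAt 0 hline).congr_deriv InnerProductSpace.toDual_apply_apply
  have hφc : ConvexOn ℝ Set.univ (fun t : ℝ => f (x + t • (y - x))) := by
    have := hconv.comp_affineMap (AffineMap.lineMap x y : ℝ →ᵃ[ℝ] E)
    have heq : (f ∘ (AffineMap.lineMap x y : ℝ →ᵃ[ℝ] E)) = fun t : ℝ => f (x + t • (y - x)) := by
      funext t; simp only [Function.comp_apply]; rw [AffineMap.lineMap_apply]; rw [add_comm]; rfl
    rw [heq] at this
    simpa using this
  have := hφc.le_slope_of_hasDerivAt (Set.mem_univ 0) (Set.mem_univ 1) zero_lt_one hφ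
  simp [slope_def_field] at this
  simpa using by linarith [this]

/-- Łojasiewicz inequality with exponent `1/2` for the consensus augmented
Lagrangian `L_c`: with each `F_i` convex differentiable, `G` differentiable `σ_G`-weakly
convex, `cV ≥ σ_G`, a stationary point `w* = ({p_i^*},{ν_i^*},q^*)` and a point
`w = ({p_i},{ν_i},q)` satisfying the ADMM first-order conditions, if
`‖A_i p_i − A_i p_i^*‖ ≤ ε` for all `i` and `‖∇L_c(w)‖ ≥ η` (gradient computed blockwise),
then `L_c(w) − L_c(w*) ≤ (1 + cVε²/(2η²))‖∇L_c(w)‖²`, and in particular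
`(L_c(w) − L_c(w*))^{1/2} ≤ C‖∇L_c(w)‖` with `C = (1 + cVε²/(2η²))^{1/2}`. -/
theorem statement16 {V m : ℕ} {n : Fin V → ℕ} (c σG : ℝ) (hc : 0 < c)
    (hcV : c * V ≥ σG)
    (A : (i : Fin V) → Matrix (Fin m) (Fin (n i)) ℝ)
    (F : (i : Fin V) → EuclideanSpace ℝ (Fin (n i)) → ℝ)
    (hFconv : ∀ i, ConvexOn ℝ Set.univ (F i))
    (hFdiff : ∀ i, Differentiable ℝ (F i))
    (G : EuclideanSpace ℝ (Fin m) → ℝ) (hGdiff : Differentiable ℝ G)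
    (hGweak : ∀ x y : EuclideanSpace ℝ (Fin m),
      G y ≥ G x + ⟪gradient G x, y - x⟫ - σG / 2 * ‖y - x‖ ^ 2)
    (Lc : ((i : Fin V) → EuclideanSpace ℝ (Fin (n i))) →
      (Fin V → EuclideanSpace ℝ (Fin m)) → EuclideanSpace ℝ (Fin m) → ℝ)
    (hLc : ∀ p ν q, Lc p ν q =
      (∑ i, (F i (p i) + ⟪ν i, Matrix.toEuclideanLin (A i) (p i) - q⟫
        + c / 2 * ‖Matrix.toEuclideanLin (A i) (p i) - q‖ ^ 2)) + G q)
    (pstar : (i : Fin V) → EuclideanSpace ℝ (Fin (n i)))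
    (νstar : Fin V → EuclideanSpace ℝ (Fin m)) (qstar : EuclideanSpace ℝ (Fin m))
    (hstat1 : ∀ i, Matrix.toEuclideanLin (A i) (pstar i) = qstar)
    (hstat2 : ∀ i, gradient (F i) (pstar i) = -(Matrix.toEuclideanLin (A i)ᵀ (νstar i)))
    (hstat3 : gradient G qstar = ∑ i, νstar i)
    (p : (i : Fin V) → EuclideanSpace ℝ (Fin (n i)))
    (ν : Fin V → EuclideanSpace ℝ (Fin m)) (q : EuclideanSpace ℝ (Fin m))
    (h1 : ∀ i, gradient (F i) (p i) = -(Matrix.toEuclideanLin (A i)ᵀ (ν i)))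
    (h2 : gradient G q = ∑ i, (ν i + c • (Matrix.toEuclideanLin (A i) (p i) - q)))
    (ε η : ℝ) (hε : 0 < ε) (hη : 0 < η)
    (hres : ∀ i, ‖Matrix.toEuclideanLin (A i) (p i)
      - Matrix.toEuclideanLin (A i) (pstar i)‖ ≤ ε)
    (hgrad : η ≤ Real.sqrt
      ((∑ i, ‖gradient (fun x => Lc (Function.update p i x) ν q) (p i)‖ ^ 2)
        + (∑ i, ‖gradient (fun x => Lc p (Function.update ν i x) q) (ν i)‖ ^ 2)
        + ‖gradient (fun x => Lc p ν x) q‖ ^ 2)) :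
    Lc p ν q - Lc pstar νstar qstar
      ≤ (1 + c * V * ε ^ 2 / (2 * η ^ 2)) *
          ((∑ i, ‖gradient (fun x => Lc (Function.update p i x) ν q) (p i)‖ ^ 2)
            + (∑ i, ‖gradient (fun x => Lc p (Function.update ν i x) q) (ν i)‖ ^ 2)
            + ‖gradient (fun x => Lc p ν x) q‖ ^ 2)
    ∧ Real.sqrt (Lc p ν q - Lc pstar νstar qstar)
        ≤ Real.sqrt (1 + c * V * ε ^ 2 / (2 * η ^ 2)) *
            Real.sqrt
              ((∑ i, ‖gradient (fun x => Lc (Function.update p i x) ν q) (p i)‖ ^ 2)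
                + (∑ i, ‖gradient (fun x => Lc p (Function.update ν i x) q) (ν i)‖ ^ 2)
                + ‖gradient (fun x => Lc p ν x) q‖ ^ 2) := by
    classical
  set r : Fin V → EuclideanSpace ℝ (Fin m) :=
    fun i => Matrix.toEuclideanLin (A i) (p i) - q with hr
  set e : EuclideanSpace ℝ (Fin m) := qstar - q with he
  set d : Fin V → EuclideanSpace ℝ (Fin m) :=
    fun i => Matrix.toEuclideanLin (A i) (pstar i) - Matrix.toEuclideanLin (A i) (p i) with hd
  have hde : ∀ i, d i + r i = e := by
    intro i; simp only [hd, hr, he, hstat1 i]; abel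
  have hdε : ∀ i, ‖d i‖ ≤ ε := by
    intro i; simp only [hd]; rw [norm_sub_rev]; exact hres i
  -- convexity bound on F
  have hFle : ∀ i, F i (p i) - F i (pstar i) ≤ ⟪ν i, d i⟫ := by
    intro i
    have h := convex_grad_aux (hFconv i) (hFdiff i) (p i) (pstar i)
    have hadj : ⟪Matrix.toEuclideanLin (A i)ᵀ (ν i), pstar i - p i⟫
        = ⟪ν i, d i⟫ := by
      rw [← Matrix.conjTranspose_eq_transpose_of_trivial,
        Matrix.toEuclideanLin_conjTranspose_eq_adjoint, LinearMap.adjoint_inner_left]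
      simp only [hd, map_sub]
    rw [h1 i, inner_neg_left, hadj] at h
    linarith
  -- per-index inequality
  have hmain : ∀ i, F i (p i) + ⟪ν i, r i⟫ + c / 2 * ‖r i‖ ^ 2 - F i (pstar i)
      ≤ c / 2 * ε ^ 2 + ⟪ν i + c • r i, e⟫ - c / 2 * ‖e‖ ^ 2 := by
    intro i
    have h1' := hFle i
    have hνe : ⟪ν i, d i⟫ + ⟪ν i, r i⟫ = ⟪ν i, e⟫ := by
      rw [← inner_add_right, hde i]
    have hinner : ⟪ν i + c • r i, e⟫ = ⟪ν i, e⟫ + c * ⟪e, r i⟫ := by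
      rw [inner_add_left, real_inner_smul_left, real_inner_comm (r i) e]
    have hdsq : ‖d i‖ ^ 2 ≤ ε ^ 2 := pow_le_pow_left₀ (norm_nonneg _) (hdε i) 2
    have hsq : ‖d i‖ ^ 2 = ‖e‖ ^ 2 - 2 * ⟪e, r i⟫ + ‖r i‖ ^ 2 := by
      have : d i = e - r i := by rw [← hde i]; abel
      rw [this, @norm_sub_sq_real]
    have hc2 : c / 2 * ‖d i‖ ^ 2 ≤ c / 2 * ε ^ 2 :=
      mul_le_mul_of_nonneg_left hdsq (by linarith)
    have hc3 : c / 2 * ‖d i‖ ^ 2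
        = c / 2 * ‖e‖ ^ 2 - c * ⟪e, r i⟫ + c / 2 * ‖r i‖ ^ 2 := by
      rw [hsq]; ring
    linarith [h1', hνe, hinner, hc2, hc3]
  -- weak convexity bound on G
  have hGle : G q - G qstar ≤ -(∑ i, ⟪ν i + c • r i, e⟫) + c * V / 2 * ‖e‖ ^ 2 := by
    have h := hGweak q qstar
    rw [h2] at h
    have hsum : ⟪∑ i, (ν i + c • (Matrix.toEuclideanLin (A i) (p i) - q)), qstar - q⟫
        = ∑ i, ⟪ν i + c • r i, e⟫ := by
      rw [sum_inner]
    rw [hsum] at h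
    have hσ : σG / 2 * ‖qstar - q‖ ^ 2 ≤ c * V / 2 * ‖e‖ ^ 2 := by
      rw [← he]
      exact mul_le_mul_of_nonneg_right (by linarith) (sq_nonneg _)
    rw [← he] at h
    linarith
  -- the key distance bound
  have hkey : Lc p ν q - Lc pstar νstar qstar ≤ c * V * ε ^ 2 / 2 := by
    have hzero : ∀ i : Fin V, Matrix.toEuclideanLin (A i) (pstar i) - qstar
        = (0 : EuclideanSpace ℝ (Fin m)) := by
      intro i; rw [hstat1 i, sub_self]
    have hLstar : Lc pstar νstar qstar = (∑ i, F i (pstar i)) + G qstar := by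
      rw [hLc]
      congr 1
      apply Finset.sum_congr rfl
      intro i _
      rw [hzero i]
      simp
    have hLw : Lc p ν q = (∑ i, (F i (p i) + ⟪ν i, r i⟫ + c / 2 * ‖r i‖ ^ 2)) + G q := by
      rw [hLc]
    rw [hLstar, hLw]
    have hsum := Finset.sum_le_sum (fun i (_ : i ∈ Finset.univ) => hmain i)
    rw [Finset.sum_sub_distrib] at hsum
    have hrhs : ∑ i : Fin V, (c / 2 * ε ^ 2 + ⟪ν i + c • r i, e⟫ - c / 2 * ‖e‖ ^ 2)
        = (V : ℝ) * (c / 2 * ε ^ 2) + (∑ i, ⟪ν i + c • r i, e⟫)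
          - (V : ℝ) * (c / 2 * ‖e‖ ^ 2) := by
      rw [Finset.sum_sub_distrib, Finset.sum_add_distrib, Finset.sum_const,
        Finset.sum_const, Finset.card_univ, Fintype.card_fin, nsmul_eq_mul, nsmul_eq_mul]
    rw [hrhs] at hsum
    have e1 : (V : ℝ) * (c / 2 * ε ^ 2) = c * V * ε ^ 2 / 2 := by ring
    have e2 : (V : ℝ) * (c / 2 * ‖e‖ ^ 2) = c * V / 2 * ‖e‖ ^ 2 := by ring
    linarith [hsum, hGle, e1, e2]
  -- the gradient norm expression
  set S : ℝ := (∑ i, ‖gradient (fun x => Lc (Function.update p i x) ν q) (p i)‖ ^ 2)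
      + (∑ i, ‖gradient (fun x => Lc p (Function.update ν i x) q) (ν i)‖ ^ 2)
      + ‖gradient (fun x => Lc p ν x) q‖ ^ 2 with hS
  have hS0 : 0 ≤ S := by
    rw [hS]
    have : ∀ (k : ℕ) (g : Fin k → ℝ), (0:ℝ) ≤ ∑ i, (g i) ^ 2 := fun k g =>
      Finset.sum_nonneg fun i _ => sq_nonneg _
    positivity
  have hη2 : η ^ 2 ≤ S := by
    have h := pow_le_pow_left₀ hη.le hgrad 2
    rwa [Real.sq_sqrt hS0] at h
  have hK0 : 0 ≤ c * V * ε ^ 2 / (2 * η ^ 2) := by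
    apply div_nonneg
    · positivity
    · positivity
  have hKS : c * V * ε ^ 2 / 2 ≤ (c * V * ε ^ 2 / (2 * η ^ 2)) * S := by
    have h1'' : (c * V * ε ^ 2 / (2 * η ^ 2)) * η ^ 2 = c * V * ε ^ 2 / 2 := by
      field_simp
    calc c * V * ε ^ 2 / 2 = (c * V * ε ^ 2 / (2 * η ^ 2)) * η ^ 2 := h1''.symm
      _ ≤ (c * V * ε ^ 2 / (2 * η ^ 2)) * S := mul_le_mul_of_nonneg_left hη2 hK0
  have hfirst : Lc p ν q - Lc pstar νstar qstar
      ≤ (1 + c * V * ε ^ 2 / (2 * η ^ 2)) * S := by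
    have hring : (1 + c * V * ε ^ 2 / (2 * η ^ 2)) * S
        = S + (c * V * ε ^ 2 / (2 * η ^ 2)) * S := by ring
    linarith [hkey, hKS, hS0, hring]
  refine ⟨hfirst, ?_⟩
  have h1K : (0:ℝ) ≤ 1 + c * V * ε ^ 2 / (2 * η ^ 2) := by linarith
  calc Real.sqrt (Lc p ν q - Lc pstar νstar qstar)
      ≤ Real.sqrt ((1 + c * V * ε ^ 2 / (2 * η ^ 2)) * S) := Real.sqrt_le_sqrt hfirst
    _ = Real.sqrt (1 + c * V * ε ^ 2 / (2 * η ^ 2)) * Real.sqrt S := Real.sqrt_mul h1K S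
end
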